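/- For fixed even q ≥ 4, the information rate of the NCC code, R_NCC(n,q) = (1/n)·log_q(∑_{k=1}^{q/2} k!·S(n,k)·C(q-k+1,k)), converges as n → ∞ to 1 - log_q 2, which is also the limit of the even/odd code rate 1 - ((n-1)/n)·log_q 2 and equals the rate of the all-even code. -/

import Mathlib

open Filter

/-- Stirling numbers of the second kind. -/
def stirling : ℕ → ℕ → ℕ
  | 0, 0 => 1
  | 0, _ + 1 => 0
  | _ + 1, 0 => 0
  | n + 1, k + 1 => stirling n k + (k + 1) * stirling n (k + 1)

lemma stirling_eq_zero : ∀ n k, n < k → stirling n k = 0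
  | 0, k + 1, _ => rfl
  | n + 1, k + 1, h => by
    have h1 := stirling_eq_zero n k (by omega)
    have h2 := stirling_eq_zero n (k+1) (by omega)
    simp [stirling, h1, h2]

lemma stirling_self : ∀ n, stirling n n = 1
  | 0 => rfl
  | n + 1 => by
    simp [stirling, stirling_self n, stirling_eq_zero n (n+1) (by omega)]

lemma stirling_lower : ∀ n k, k ≤ n → k ^ (n - k) ≤ stirling n k
  | 0, 0, _ => le_refl _
  | n + 1, 0, _ => by simp [stirling]
  | n + 1, k + 1, h => by
    rcases eq_or_lt_of_le h with he | hlt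
    · rw [← he]; simp [stirling_self]
    · have ih := stirling_lower n (k+1) (by omega)
      show (k+1) ^ (n + 1 - (k+1)) ≤ stirling n k + (k + 1) * stirling n (k + 1)
      calc (k+1) ^ (n + 1 - (k+1)) = (k+1) * (k+1) ^ (n - (k+1)) := by
            rw [← pow_succ']; congr 1; omega
        _ ≤ (k+1) * stirling n (k+1) := Nat.mul_le_mul_left _ ih
        _ ≤ _ := Nat.le_add_left _ _

lemma stirling_identity : ∀ (n k : ℕ),
    ∑ j ∈ Finset.range (k+1), Nat.choose k j * (Nat.factorial j * stirling n j) = k ^ n := by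
  intro n
  induction n with
  | zero =>
    intro k
    rw [Finset.sum_eq_single 0]
    · simp [stirling]
    · intro j _ hj
      obtain ⟨i, rfl⟩ := Nat.exists_eq_succ_of_ne_zero hj
      simp [stirling]
    · simp
  | succ n ih =>
    intro k
    cases k with
    | zero => simp [stirling]
    | succ m =>
      have key : ∀ j, j * Nat.choose (m+1) j + (m+1) * Nat.choose m j
          = (m+1) * Nat.choose (m+1) j := by
        intro j
        cases j with
        | zero => simp
        | succ i =>
          have h1 : (m+1) * Nat.choose m i = Nat.choose (m+1) (i+1) * (i+1) :=
            Nat.add_one_mul_choose_eq m i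
          have h2 : Nat.choose (m+1) (i+1) = Nat.choose m i + Nat.choose m (i+1) :=
            Nat.choose_succ_succ m i
          nlinarith [h1, h2]
      have hA : ∑ j ∈ Finset.range (m+2), Nat.choose m j * (Nat.factorial j * stirling n j)
          = m ^ n := by
        rw [Finset.sum_range_succ, Nat.choose_eq_zero_of_lt (by omega)]
        simpa using ih m
      have hB : (∑ j ∈ Finset.range (m+2),
            j * Nat.choose (m+1) j * (Nat.factorial j * stirling n j))
          + (m+1) * (∑ j ∈ Finset.range (m+2),
            Nat.choose m j * (Nat.factorial j * stirling n j))
          = (m+1) * (m+1) ^ n := by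
        rw [Finset.mul_sum, ← Finset.sum_add_distrib]
        rw [Finset.sum_congr rfl (fun j (_ : j ∈ Finset.range (m+2)) => by
          show j * Nat.choose (m+1) j * (Nat.factorial j * stirling n j)
              + (m+1) * (Nat.choose m j * (Nat.factorial j * stirling n j))
            = (m+1) * (Nat.choose (m+1) j * (Nat.factorial j * stirling n j))
          calc j * Nat.choose (m+1) j * (Nat.factorial j * stirling n j)
                + (m+1) * (Nat.choose m j * (Nat.factorial j * stirling n j))
              = (j * Nat.choose (m+1) j + (m+1) * Nat.choose m j)
                * (Nat.factorial j * stirling n j) := by ring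
            _ = _ := by rw [key j]; ring)]
        rw [← Finset.mul_sum, ih (m+1)]
      rw [Finset.sum_range_succ']
      have h0 : stirling (n+1) 0 = 0 := rfl
      rw [h0]
      simp only [Nat.mul_zero, Nat.zero_mul, Nat.add_zero, Nat.mul_one, mul_zero, zero_mul,
        add_zero]
      have expand : ∀ j, Nat.choose (m+1) (j+1) * (Nat.factorial (j+1) * stirling (n+1) (j+1))
          = (m+1) * (Nat.choose m j * (Nat.factorial j * stirling n j))
            + ((j+1) * Nat.choose (m+1) (j+1)) * (Nat.factorial (j+1) * stirling n (j+1)) := by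
        intro j
        have h1 : (m+1) * Nat.choose m j = Nat.choose (m+1) (j+1) * (j+1) :=
          Nat.add_one_mul_choose_eq m j
        have hs : stirling (n+1) (j+1) = stirling n j + (j+1) * stirling n (j+1) := rfl
        rw [hs, Nat.factorial_succ]
        calc Nat.choose (m+1) (j+1) * ((j+1) * Nat.factorial j
              * (stirling n j + (j+1) * stirling n (j+1)))
            = (Nat.choose (m+1) (j+1) * (j+1)) * (Nat.factorial j * stirling n j)
              + ((j+1) * Nat.choose (m+1) (j+1))
                * ((j+1) * Nat.factorial j * stirling n (j+1)) := by ring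
          _ = _ := by rw [← h1]; ring
      rw [Finset.sum_congr rfl (fun j _ => expand j), Finset.sum_add_distrib, ← Finset.mul_sum]
      rw [ih m]
      have hshift : ∑ j ∈ Finset.range (m+1),
            ((j+1) * Nat.choose (m+1) (j+1)) * (Nat.factorial (j+1) * stirling n (j+1))
          = ∑ j ∈ Finset.range (m+2),
            j * Nat.choose (m+1) j * (Nat.factorial j * stirling n j) := by
        conv_rhs => rw [show m+2 = (m+1)+1 from rfl, Finset.sum_range_succ']
        simp [mul_assoc]
      rw [hshift, hA] at *
      have hp : (m+1) ^ (n+1) = (m+1) * (m+1) ^ n := by ring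
      omega

lemma factorial_stirling_le (n k : ℕ) : Nat.factorial k * stirling n k ≤ k ^ n := by
  rw [← stirling_identity n k]
  have := Finset.single_le_sum
    (f := fun j => Nat.choose k j * (Nat.factorial j * stirling n j))
    (fun i _ => Nat.zero_le _) (Finset.self_mem_range_succ k)
  simpa [Nat.choose_self] using this

/-- For fixed even `q ≥ 4`, the NCC information rate tends to `1 - log_q 2` as
`n → ∞`; this is also the limit of the even/odd rate `1 - ((n-1)/n)·log_q 2`
and equals the (constant) rate of the all-even code. -/
theorem ncc_rate_tendsto (q : ℕ) (hq : Even q) (hq4 : 4 ≤ q) :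
    Tendsto (fun n : ℕ =>
        Real.logb q ((∑ k ∈ Finset.Icc 1 (q / 2),
          Nat.factorial k * stirling n k * Nat.choose (q - k + 1) k : ℕ) : ℝ)
          / (n : ℝ))
      atTop (nhds (1 - Real.logb q 2)) ∧
    Tendsto (fun n : ℕ => 1 - ((n : ℝ) - 1) / (n : ℝ) * Real.logb q 2)
      atTop (nhds (1 - Real.logb q 2)) ∧
    ∀ n : ℕ, 1 ≤ n →
      Real.logb q (((q / 2 : ℕ) : ℝ) ^ n) / (n : ℝ) = 1 - Real.logb q 2 := by
  obtain ⟨t, rfl⟩ := hq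
  set q := t + t with hqdef
  have hm2 : 2 ≤ t := by omega
  have hmq : q / 2 = t := by omega
  have hq1 : (1 : ℝ) < (q : ℝ) := by
    have : (4:ℝ) ≤ (q:ℝ) := by exact_mod_cast hq4
    linarith
  have hmpos : (0 : ℝ) < (t : ℝ) := by positivity
  -- the key constant
  have hlogm : Real.logb q (t : ℝ) = 1 - Real.logb q 2 := by
    have h2 : (t : ℝ) = (q : ℝ) / 2 := by
      rw [hqdef]; push_cast; ring
    rw [h2, Real.logb_div (by positivity) (by norm_num),
      Real.logb_self_eq_one (by linarith)]
  set c := Real.logb q 2 with hc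
  have hone : Tendsto (fun n : ℕ => 1 / (n : ℝ)) atTop (nhds 0) :=
    tendsto_one_div_atTop_nhds_zero_nat
  refine ⟨?_, ?_, ?_⟩
  · -- NCC rate
    rw [hmq]
    set S : ℕ → ℕ := fun n => ∑ k ∈ Finset.Icc 1 t,
      Nat.factorial k * stirling n k * Nat.choose (q - k + 1) k with hS
    set Cst : ℕ := ∑ k ∈ Finset.Icc 1 t, Nat.choose (q - k + 1) k with hCst
    have hCst1 : 1 ≤ Cst := by
      have : t ∈ Finset.Icc 1 t := by simp; omega
      calc 1 ≤ Nat.choose (q - t + 1) t := Nat.choose_pos (by omega)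
        _ ≤ Cst := Finset.single_le_sum (f := fun k => Nat.choose (q - k + 1) k)
            (fun i _ => Nat.zero_le _) this
    have hupper : ∀ n, S n ≤ Cst * t ^ n := by
      intro n
      rw [hCst, Finset.sum_mul]
      apply Finset.sum_le_sum
      intro k hk
      simp only [Finset.mem_Icc] at hk
      calc Nat.factorial k * stirling n k * Nat.choose (q - k + 1) k
          ≤ k ^ n * Nat.choose (q - k + 1) k :=
            Nat.mul_le_mul_right _ (factorial_stirling_le n k)
        _ ≤ t ^ n * Nat.choose (q - k + 1) k :=
            Nat.mul_le_mul_right _ (Nat.pow_le_pow_left hk.2 n)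
        _ = Nat.choose (q - k + 1) k * t ^ n := by ring
    have hlowerN : ∀ n, t ≤ n → t ^ (n - t) ≤ S n := by
      intro n hn
      have ht : t ∈ Finset.Icc 1 t := by simp; omega
      calc t ^ (n - t) ≤ stirling n t := stirling_lower n t hn
        _ ≤ Nat.factorial t * stirling n t * Nat.choose (q - t + 1) t := by
          have h1 : 1 ≤ Nat.factorial t := Nat.one_le_iff_ne_zero.mpr (Nat.factorial_ne_zero t)
          have h2 : 1 ≤ Nat.choose (q - t + 1) t := Nat.choose_pos (by omega)
          calc stirling n t = 1 * stirling n t * 1 := by ring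
            _ ≤ Nat.factorial t * stirling n t * Nat.choose (q - t + 1) t :=
              Nat.mul_le_mul (Nat.mul_le_mul h1 le_rfl) h2
        _ ≤ S n := Finset.single_le_sum
            (f := fun k => Nat.factorial k * stirling n k * Nat.choose (q - k + 1) k)
            (fun i _ => Nat.zero_le _) ht
    -- squeeze
    have hglim : Tendsto (fun n : ℕ => (1 - (t : ℝ) * (1 / n)) * Real.logb q t)
        atTop (nhds (1 - c)) := by
      have := ((tendsto_const_nhds (x := (1:ℝ))).sub
        ((tendsto_const_nhds (x := (t:ℝ))).mul hone)).mul
        (tendsto_const_nhds (x := Real.logb q t))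
      simpa [hlogm] using this
    have hhlim : Tendsto (fun n : ℕ => Real.logb q (Cst : ℝ) * (1 / n) + Real.logb q t)
        atTop (nhds (1 - c)) := by
      have := ((tendsto_const_nhds (x := Real.logb q (Cst:ℝ))).mul hone).add
        (tendsto_const_nhds (x := Real.logb q t))
      simpa [hlogm] using this
    apply tendsto_of_tendsto_of_tendsto_of_le_of_le' hglim hhlim
    · -- lower bound eventually
      filter_upwards [eventually_ge_atTop (t + 1)] with n hn
      have hnpos : (0 : ℝ) < n := by
        have : (0:ℕ) < n := by omega
        exact_mod_cast this
      have hSpos : (0 : ℝ) < ((S n : ℕ) : ℝ) := by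
        have h1 : 1 ≤ S n := le_trans (Nat.one_le_pow _ _ (by omega)) (hlowerN n (by omega))
        exact_mod_cast h1
      have hlog : ((n : ℝ) - t) * Real.logb q t ≤ Real.logb q ((S n : ℕ) : ℝ) := by
        have h1 : Real.logb q (((t ^ (n - t) : ℕ) : ℝ)) ≤ Real.logb q ((S n : ℕ) : ℝ) := by
          apply Real.logb_le_logb_of_le hq1
          · have : 1 ≤ t ^ (n - t) := Nat.one_le_pow _ _ (by omega)
            exact_mod_cast this
          · exact_mod_cast hlowerN n (by omega)
        have h2 : Real.logb q (((t ^ (n - t) : ℕ) : ℝ)) = ((n : ℝ) - t) * Real.logb q t := by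
          push_cast
          rw [Real.logb_pow]
          congr 1
          have : ((n - t : ℕ) : ℝ) = (n : ℝ) - t := by
            have : t ≤ n := by omega
            push_cast [this]; ring
          rw [this]
        rw [← h2]; exact h1
      have hn0 : (n : ℝ) ≠ 0 := ne_of_gt hnpos
      have heq : (1 - (t : ℝ) * (1 / n)) * Real.logb q t
          = (((n : ℝ) - t) * Real.logb q t) / n := by field_simp
      rw [heq]
      exact div_le_div_of_nonneg_right hlog hnpos.le
    · -- upper bound eventually
      filter_upwards [eventually_ge_atTop (t + 1)] with n hn
      have hnpos : (0 : ℝ) < n := by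
        have : (0:ℕ) < n := by omega
        exact_mod_cast this
      have hSpos : (0 : ℝ) < ((S n : ℕ) : ℝ) := by
        have h1 : 1 ≤ S n := le_trans (Nat.one_le_pow _ _ (by omega)) (hlowerN n (by omega))
        exact_mod_cast h1
      have hlog : Real.logb q ((S n : ℕ) : ℝ) ≤ Real.logb q (Cst : ℝ) + n * Real.logb q t := by
        have h1 : Real.logb q ((S n : ℕ) : ℝ) ≤ Real.logb q (((Cst * t ^ n : ℕ) : ℝ)) := by
          apply Real.logb_le_logb_of_le hq1 hSpos
          exact_mod_cast hupper n
        have h2 : Real.logb q (((Cst * t ^ n : ℕ) : ℝ))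
            = Real.logb q (Cst : ℝ) + n * Real.logb q t := by
          push_cast
          rw [Real.logb_mul (by exact_mod_cast Nat.one_le_iff_ne_zero.mp hCst1)
            (by positivity), Real.logb_pow]
        rw [← h2]; exact h1
      have hn0 : (n : ℝ) ≠ 0 := ne_of_gt hnpos
      have heq : Real.logb q (Cst : ℝ) * (1 / n) + Real.logb q t
          = (Real.logb q (Cst : ℝ) + n * Real.logb q t) / n := by field_simp
      rw [heq]
      exact div_le_div_of_nonneg_right hlog hnpos.le
  · -- even/odd rate
    have h1 : Tendsto (fun n : ℕ => 1 - (1 - 1 / (n : ℝ)) * c) atTop (nhds (1 - c)) := by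
      have := (tendsto_const_nhds (x := (1:ℝ))).sub
        (((tendsto_const_nhds (x := (1:ℝ))).sub hone).mul (tendsto_const_nhds (x := c)))
      simpa using this
    apply h1.congr'
    filter_upwards [eventually_ge_atTop 1] with n hn
    have hnpos : (0 : ℝ) < n := by
      have : (0:ℕ) < n := by omega
      exact_mod_cast this
    have : (1 : ℝ) - 1 / n = ((n : ℝ) - 1) / n := by field_simp
    rw [this]
  · -- all-even code
    intro n hn
    rw [hmq]
    have hnpos : (0 : ℝ) < n := by exact_mod_cast hn
    rw [Real.logb_pow, hlogm]
    field_simp
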